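/- The dimension of the irreducible representation of S_n indexed by a partition λ ⊢ n equals n! divided by the product of the hook lengths h_{i,j}^λ over all cells (i,j) of the Young diagram of λ; equivalently, the number of standard Young tableaux of shape λ equals n! / ∏_{(i,j)∈λ} h_{i,j}^λ. -/

import Mathlib

/-- The hook length of the cell `(i,j)` (0-indexed) of a Young diagram `μ`:
`h = (λ_i − (j+1)) + (λ'_j − (i+1)) + 1` where `λ_i = μ.rowLen i`, `λ'_j = μ.colLen j`. -/
def hookLength (μ : YoungDiagram) (i j : ℕ) : ℕ :=
  (μ.rowLen i - (j + 1)) + (μ.colLen j - (i + 1)) + 1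

/-- A standard Young tableau of shape `μ`: a bijective filling of the cells of `μ`
by `0, …, n−1` that is strictly increasing along rows and along columns. -/
def IsStandardYoungTableau (μ : YoungDiagram)
    (f : {c : ℕ × ℕ // c ∈ μ.cells} → Fin μ.card) : Prop :=
  Function.Bijective f ∧
    (∀ a b : {c : ℕ × ℕ // c ∈ μ.cells}, a.1.1 = b.1.1 → a.1.2 < b.1.2 → (f a : ℕ) < f b) ∧
    (∀ a b : {c : ℕ × ℕ // c ∈ μ.cells}, a.1.2 = b.1.2 → a.1.1 < b.1.1 → (f a : ℕ) < f b)

namespace HLF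

def IsCorner (μ : YoungDiagram) (a b : ℕ) : Prop :=
  (a, b) ∈ μ ∧ (a + 1, b) ∉ μ ∧ (a, b + 1) ∉ μ

lemma IsCorner.rowLen {μ : YoungDiagram} {a b : ℕ} (h : IsCorner μ a b) :
    μ.rowLen a = b + 1 := by
  have h1 := (YoungDiagram.mem_iff_lt_rowLen).1 h.1
  have h2 := h.2.2
  rw [YoungDiagram.mem_iff_lt_rowLen] at h2
  omega

lemma IsCorner.colLen {μ : YoungDiagram} {a b : ℕ} (h : IsCorner μ a b) :
    μ.colLen b = a + 1 := by
  have h1 := (YoungDiagram.mem_iff_lt_colLen).1 h.1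
  have h2 := h.2.1
  rw [YoungDiagram.mem_iff_lt_colLen] at h2
  omega

noncomputable def corners (μ : YoungDiagram) : Finset (ℕ × ℕ) := by
  classical
  exact μ.cells.filter (fun v => (v.1 + 1, v.2) ∉ μ ∧ (v.1, v.2 + 1) ∉ μ)

lemma mem_corners {μ : YoungDiagram} {v : ℕ × ℕ} :
    v ∈ corners μ ↔ IsCorner μ v.1 v.2 := by
  classical
  simp [corners, IsCorner, YoungDiagram.mem_cells, and_assoc]

lemma rowLen_eq {ν : YoungDiagram} {i L : ℕ} (hmem : ∀ j, (i, j) ∈ ν ↔ j < L) :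
    ν.rowLen i = L := by
  have h1 : ¬ (L < ν.rowLen i) := by
    rw [← YoungDiagram.mem_iff_lt_rowLen, hmem]; omega
  rcases Nat.eq_zero_or_pos L with rfl | hL
  · omega
  · have h2 : L - 1 < ν.rowLen i := by
      rw [← YoungDiagram.mem_iff_lt_rowLen, hmem]; omega
    omega

lemma colLen_eq {ν : YoungDiagram} {j L : ℕ} (hmem : ∀ i, (i, j) ∈ ν ↔ i < L) :
    ν.colLen j = L := by
  have h1 : ¬ (L < ν.colLen j) := by
    rw [← YoungDiagram.mem_iff_lt_colLen, hmem]; omega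
  rcases Nat.eq_zero_or_pos L with rfl | hL
  · omega
  · have h2 : L - 1 < ν.colLen j := by
      rw [← YoungDiagram.mem_iff_lt_colLen, hmem]; omega
    omega

def eraseCorner (μ : YoungDiagram) (a b : ℕ) (h : IsCorner μ a b) : YoungDiagram where
  cells := μ.cells.erase (a, b)
  isLowerSet := by
    rintro ⟨i1, j1⟩ ⟨i2, j2⟩ hle hmem
    simp only [Finset.coe_erase, Set.mem_diff, Finset.mem_coe, YoungDiagram.mem_cells,
      Set.mem_singleton_iff] at hmem ⊢
    obtain ⟨hm, hne⟩ := hmem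
    obtain ⟨h1, h2⟩ := hle
    simp only at h1 h2
    refine ⟨μ.up_left_mem h1 h2 hm, ?_⟩
    intro hc
    rw [Prod.mk.injEq] at hc
    obtain ⟨rfl, rfl⟩ := hc
    apply hne
    have hi : i1 ≤ i2 := by
      by_contra hc
      exact h.2.1 (μ.up_left_mem (by omega) h2 hm)
    have hj : j1 ≤ j2 := by
      by_contra hc
      exact h.2.2 (μ.up_left_mem h1 (by omega) hm)
    rw [Prod.mk.injEq]
    omega

lemma mem_eraseCorner {μ : YoungDiagram} {a b : ℕ} (h : IsCorner μ a b) {v : ℕ × ℕ} :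
    v ∈ eraseCorner μ a b h ↔ v ∈ μ ∧ v ≠ (a, b) := by
  show v ∈ (eraseCorner μ a b h).cells ↔ _
  rw [show (eraseCorner μ a b h).cells = μ.cells.erase (a, b) from rfl, Finset.mem_erase]
  rw [YoungDiagram.mem_cells, and_comm]

lemma card_eraseCorner {μ : YoungDiagram} {a b : ℕ} (h : IsCorner μ a b) :
    (eraseCorner μ a b h).card = μ.card - 1 := by
  show (μ.cells.erase (a, b)).card = _
  rw [Finset.card_erase_of_mem (by simpa using h.1)]

lemma rowLen_eraseCorner {μ : YoungDiagram} {a b : ℕ} (h : IsCorner μ a b) (i : ℕ) :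
    (eraseCorner μ a b h).rowLen i = μ.rowLen i - (if i = a then 1 else 0) := by
  rcases eq_or_ne i a with rfl | hne
  · rw [if_pos rfl, h.rowLen, Nat.add_sub_cancel]
    apply rowLen_eq
    intro j
    rw [mem_eraseCorner h, YoungDiagram.mem_iff_lt_rowLen, h.rowLen, Ne, Prod.mk.injEq]
    simp only [eq_self_iff_true, true_and]
    omega
  · simp only [if_neg hne, Nat.sub_zero]
    apply rowLen_eq
    intro j
    rw [mem_eraseCorner h, YoungDiagram.mem_iff_lt_rowLen, Ne, Prod.mk.injEq]
    have := YoungDiagram.mem_iff_lt_rowLen (μ := μ) (i := i) (j := j)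
    tauto

lemma colLen_eraseCorner {μ : YoungDiagram} {a b : ℕ} (h : IsCorner μ a b) (j : ℕ) :
    (eraseCorner μ a b h).colLen j = μ.colLen j - (if j = b then 1 else 0) := by
  rcases eq_or_ne j b with rfl | hne
  · rw [if_pos rfl, h.colLen, Nat.add_sub_cancel]
    apply colLen_eq
    intro i
    rw [mem_eraseCorner h, YoungDiagram.mem_iff_lt_colLen, h.colLen, Ne, Prod.mk.injEq]
    simp only [eq_self_iff_true, and_true]
    omega
  · simp only [if_neg hne, Nat.sub_zero]
    apply colLen_eq
    intro i
    rw [mem_eraseCorner h, YoungDiagram.mem_iff_lt_colLen, Ne, Prod.mk.injEq]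
    have := YoungDiagram.mem_iff_lt_colLen (μ := μ) (i := i) (j := j)
    tauto

section Walk

open Finset

lemma hookLength_transpose (μ : YoungDiagram) (i j : ℕ) :
    hookLength μ.transpose j i = hookLength μ i j := by
  unfold hookLength
  rw [YoungDiagram.rowLen_transpose, YoungDiagram.colLen_transpose]
  ring

lemma isCorner_transpose {μ : YoungDiagram} {a b : ℕ} (h : IsCorner μ a b) :
    IsCorner μ.transpose b a := by
  obtain ⟨h1, h2, h3⟩ := h
  exact ⟨YoungDiagram.mem_transpose.2 h1, fun hc => h3 (YoungDiagram.mem_transpose.1 hc),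
    fun hc => h2 (YoungDiagram.mem_transpose.1 hc)⟩

/-- The hook length as a rational number. -/
noncomputable def hq (μ : YoungDiagram) (x y : ℕ) : ℚ := (hookLength μ x y : ℚ)

noncomputable def pp (μ : YoungDiagram) (a b : ℕ) (x : ℕ) : ℚ := hq μ x b - 1

noncomputable def PP (μ : YoungDiagram) (a b : ℕ) (x : ℕ) : ℚ :=
  ∏ i ∈ Finset.Ico x a, (1 + 1 / pp μ a b i)

noncomputable def Frow (μ : YoungDiagram) (a b : ℕ) (x : ℕ) : ℚ :=
  if x = a then 1 else (1 / pp μ a b x) * PP μ a b (x + 1)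

/-- The Greene–Nijenhuis–Wilf hook-walk weight of cell `v` relative to corner `(a,b)`. -/
noncomputable def FF (μ : YoungDiagram) (a b : ℕ) (v : ℕ × ℕ) : ℚ :=
  if v.1 ≤ a ∧ v.2 ≤ b then Frow μ a b v.1 * Frow μ.transpose b a v.2 else 0

lemma hq_transpose (μ : YoungDiagram) (i j : ℕ) : hq μ.transpose j i = hq μ i j := by
  rw [hq, hq, hookLength_transpose]

lemma FF_transpose (μ : YoungDiagram) (a b : ℕ) (x y : ℕ) :
    FF μ.transpose b a (y, x) = FF μ a b (x, y) := by
  rw [FF, FF]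
  simp only [YoungDiagram.transpose_transpose]
  rcases em (x ≤ a ∧ y ≤ b) with hc | hc
  · rw [if_pos ⟨hc.2, hc.1⟩, if_pos hc, mul_comm]
  · rw [if_neg (fun hx => hc ⟨hx.2, hx.1⟩), if_neg hc]

lemma one_le_hookLength (μ : YoungDiagram) (x y : ℕ) : 1 ≤ hookLength μ x y := by
  unfold hookLength; omega

lemma hq_eq {μ : YoungDiagram} {x y : ℕ} (hxy : (x, y) ∈ μ) :
    hq μ x y = (μ.rowLen x : ℚ) + μ.colLen y - x - y - 1 := by
  have h1 : y + 1 ≤ μ.rowLen x := YoungDiagram.mem_iff_lt_rowLen.1 hxy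
  have h2 : x + 1 ≤ μ.colLen y := YoungDiagram.mem_iff_lt_colLen.1 hxy
  rw [hq, hookLength]
  push_cast [Nat.cast_sub h1, Nat.cast_sub h2]
  ring

lemma hq_corner {μ : YoungDiagram} {a b : ℕ} (h : IsCorner μ a b) : hq μ a b = 1 := by
  rw [hq_eq h.1, h.rowLen, h.colLen]
  push_cast
  ring

lemma pp_ge_one {μ : YoungDiagram} {a b : ℕ} (h : IsCorner μ a b) {x : ℕ} (hx : x < a) :
    1 ≤ pp μ a b x := by
  have hmem : (x, b) ∈ μ := μ.up_left_mem (le_of_lt hx) le_rfl h.1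
  rw [pp, hq_eq hmem, h.colLen]
  have hr : μ.rowLen a ≤ μ.rowLen x := μ.rowLen_anti x a (le_of_lt hx)
  rw [h.rowLen] at hr
  have hr' : (b + 1 : ℚ) ≤ μ.rowLen x := by exact_mod_cast hr
  have hx' : (x : ℚ) + 1 ≤ a := by exact_mod_cast hx
  push_cast
  linarith

lemma pp_ne_zero {μ : YoungDiagram} {a b : ℕ} (h : IsCorner μ a b) {x : ℕ} (hx : x < a) :
    pp μ a b x ≠ 0 := by
  have := pp_ge_one h hx
  intro hc; rw [hc] at this; norm_num at this

lemma pp_self {μ : YoungDiagram} {a b : ℕ} (h : IsCorner μ a b) : pp μ a b a = 0 := by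
  rw [pp, hq_corner h]; ring

/-- key hook identity: `h(x,y) - 1 = p(x) + q(y)` inside the rectangle of a corner. -/
lemma key_sum {μ : YoungDiagram} {a b : ℕ} (h : IsCorner μ a b) {x y : ℕ}
    (hx : x ≤ a) (hy : y ≤ b) :
    pp μ a b x + pp μ.transpose b a y = hq μ x y - 1 := by
  have hxb : (x, b) ∈ μ := μ.up_left_mem hx le_rfl h.1
  have hay : (a, y) ∈ μ := μ.up_left_mem le_rfl hy h.1
  have hxy : (x, y) ∈ μ := μ.up_left_mem hx hy h.1
  rw [pp, pp, hq_transpose, hq_eq hxb, hq_eq hay, hq_eq hxy, h.rowLen, h.colLen]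
  push_cast
  ring

lemma PP_last (μ : YoungDiagram) (a b : ℕ) : PP μ a b a = 1 := by
  rw [PP, Finset.Ico_self, Finset.prod_empty]

lemma PP_succ (μ : YoungDiagram) {a : ℕ} (b : ℕ) {x : ℕ} (hx : x < a) :
    PP μ a b x = (1 + 1 / pp μ a b x) * PP μ a b (x + 1) :=
  Finset.prod_eq_prod_Ico_succ_bot hx _

lemma PP_tele (μ : YoungDiagram) (a b : ℕ) :
    ∀ n t, t ≤ a → a - t = n →
      ∑ x ∈ Finset.Ico t a, (1 / pp μ a b x) * PP μ a b (x + 1) = PP μ a b t - 1 := by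
  intro n
  induction n with
  | zero =>
    intro t ht h0
    have : t = a := by omega
    subst this
    rw [Finset.Ico_self, Finset.sum_empty, PP_last]
    ring
  | succ n ih =>
    intro t ht h0
    have htlt : t < a := by omega
    rw [Finset.sum_eq_sum_Ico_succ_bot htlt, ih (t + 1) (by omega) (by omega),
      PP_succ μ b htlt]
    ring

lemma PP_tele' (μ : YoungDiagram) {a : ℕ} (b : ℕ) {t : ℕ} (ht : t ≤ a) :
    ∑ x ∈ Finset.Ico t a, (1 / pp μ a b x) * PP μ a b (x + 1) = PP μ a b t - 1 :=
  PP_tele μ a b (a - t) t ht rfl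

lemma Frow_sum (μ : YoungDiagram) {a : ℕ} (b : ℕ) {t : ℕ} (ht : t ≤ a) :
    ∑ x ∈ Finset.Ico t (a + 1), Frow μ a b x = PP μ a b t := by
  rw [Finset.sum_Ico_succ_top (by omega)]
  have h1 : ∑ x ∈ Finset.Ico t a, Frow μ a b x
      = ∑ x ∈ Finset.Ico t a, (1 / pp μ a b x) * PP μ a b (x + 1) := by
    refine Finset.sum_congr rfl (fun x hx => ?_)
    rw [Finset.mem_Ico] at hx
    rw [Frow, if_neg (by omega)]
  rw [h1, PP_tele' μ b ht, Frow, if_pos rfl]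
  ring

end Walk

section Walk2

open Finset

lemma PP_top (μ : YoungDiagram) (a b : ℕ) : PP μ a b (a + 1) = 1 := by
  rw [PP, Finset.Ico_eq_empty (by omega), Finset.prod_empty]

lemma Frow_sum' (μ : YoungDiagram) (a b : ℕ) {x : ℕ} (hx : x ≤ a) :
    ∑ i ∈ Finset.Ioc x a, Frow μ a b i = PP μ a b (x + 1) - (if x = a then 1 else 0) := by
  rcases eq_or_lt_of_le hx with rfl | hlt
  · rw [Finset.Ioc_self, Finset.sum_empty, PP_top, if_pos rfl]
    ring
  · rw [← Finset.Ico_add_one_add_one_eq_Ioc, Frow_sum μ b (by omega), if_neg (by omega)]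
    ring

lemma FF_rowsum {μ : YoungDiagram} {a b : ℕ} {x y : ℕ} (hx : x ≤ a) (hy : y ≤ b) :
    ∑ i ∈ Finset.Ioc x a, FF μ a b (i, y)
      = (PP μ a b (x + 1) - (if x = a then 1 else 0)) * Frow μ.transpose b a y := by
  have hcongr : ∀ i ∈ Finset.Ioc x a, FF μ a b (i, y) = Frow μ a b i * Frow μ.transpose b a y := by
    intro i hi
    rw [Finset.mem_Ioc] at hi
    rw [FF, if_pos ⟨hi.2, hy⟩]
  rw [Finset.sum_congr rfl hcongr, ← Finset.sum_mul, Frow_sum' μ a b hx]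

lemma FF_colsum {μ : YoungDiagram} {a b : ℕ} {x y : ℕ} (hx : x ≤ a) (hy : y ≤ b) :
    ∑ j ∈ Finset.Ioc y b, FF μ a b (x, j)
      = (PP μ.transpose b a (y + 1) - (if y = b then 1 else 0)) * Frow μ a b x := by
  have hcongr : ∀ j ∈ Finset.Ioc y b, FF μ a b (x, j) = FF μ.transpose b a (j, x) := by
    intro j _
    rw [FF_transpose]
  rw [Finset.sum_congr rfl hcongr, FF_rowsum hy hx, YoungDiagram.transpose_transpose]

/-- The hook-walk recursion for the weight function `FF`. -/
lemma FF_rec {μ : YoungDiagram} {a b : ℕ} (h : IsCorner μ a b) {x y : ℕ}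
    (hne : (x, y) ≠ (a, b)) :
    (hq μ x y - 1) * FF μ a b (x, y)
      = (∑ i ∈ Finset.Ioc x a, FF μ a b (i, y)) + ∑ j ∈ Finset.Ioc y b, FF μ a b (x, j) := by
  by_cases hx : x ≤ a
  · by_cases hy : y ≤ b
    · rw [FF_rowsum hx hy, FF_colsum hx hy]
      have hkey := key_sum h hx hy
      have hFF : FF μ a b (x, y) = Frow μ a b x * Frow μ.transpose b a y := by
        rw [FF, if_pos ⟨hx, hy⟩]
      rw [hFF, ← hkey]
      by_cases hxa : x = a
      · by_cases hyb : y = b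
        · exact absurd (by rw [hxa, hyb]) hne
        · have hylt : y < b := by omega
          have hq0 := pp_ne_zero (isCorner_transpose h) hylt
          have e1 : Frow μ a b x = 1 := by rw [Frow, if_pos hxa]
          have e2 : Frow μ.transpose b a y
              = (1 / pp μ.transpose b a y) * PP μ.transpose b a (y + 1) := by
            rw [Frow, if_neg hyb]
          have e3 : PP μ a b (x + 1) = 1 := by rw [hxa]; exact PP_top μ a b
          have e4 : pp μ a b x = 0 := by rw [hxa]; exact pp_self h
          rw [e1, e2, e3, e4, if_pos hxa, if_neg hyb]
          field_simp
          ring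
      · have hxlt : x < a := by omega
        have hp0 := pp_ne_zero h hxlt
        have e1 : Frow μ a b x = (1 / pp μ a b x) * PP μ a b (x + 1) := by
          rw [Frow, if_neg hxa]
        by_cases hyb : y = b
        · have e2 : Frow μ.transpose b a y = 1 := by rw [Frow, if_pos hyb]
          have e3 : PP μ.transpose b a (y + 1) = 1 := by
            rw [hyb]; exact PP_top μ.transpose b a
          have e4 : pp μ.transpose b a y = 0 := by
            rw [hyb]; exact pp_self (isCorner_transpose h)
          rw [e1, e2, e3, e4, if_neg hxa, if_pos hyb]
          field_simp
          ring
        · have hylt : y < b := by omega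
          have hq0 := pp_ne_zero (isCorner_transpose h) hylt
          have e2 : Frow μ.transpose b a y
              = (1 / pp μ.transpose b a y) * PP μ.transpose b a (y + 1) := by
            rw [Frow, if_neg hyb]
          rw [e1, e2, if_neg hxa, if_neg hyb]
          field_simp
          ring
    · -- b < y : everything vanishes
      have h1 : FF μ a b (x, y) = 0 := by rw [FF, if_neg (by tauto)]
      have h2 : ∀ i ∈ Finset.Ioc x a, FF μ a b (i, y) = 0 := by
        intro i _; rw [FF, if_neg (by tauto)]
      rw [h1, Finset.sum_eq_zero h2, Finset.Ioc_eq_empty (by omega), Finset.sum_empty]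
      ring
  · have h1 : FF μ a b (x, y) = 0 := by rw [FF, if_neg (by tauto)]
    have h2 : ∀ j ∈ Finset.Ioc y b, FF μ a b (x, j) = 0 := by
      intro j _; rw [FF, if_neg (by tauto)]
    rw [h1, Finset.sum_eq_zero h2, Finset.Ioc_eq_empty (by omega), Finset.sum_empty]
    ring

/-- Rectangle sum: the total weight relative to a corner. -/
lemma FF_total {μ : YoungDiagram} {a b : ℕ} (h : IsCorner μ a b) :
    ∑ v ∈ μ.cells, FF μ a b v = PP μ a b 0 * PP μ.transpose b a 0 := by
  have hsub : (Finset.range (a + 1) ×ˢ Finset.range (b + 1)) ⊆ μ.cells := by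
    intro v hv
    rw [Finset.mem_product, Finset.mem_range, Finset.mem_range] at hv
    rw [YoungDiagram.mem_cells]
    have : (v.1, v.2) ∈ μ := μ.up_left_mem (by omega) (by omega) h.1
    simpa using this
  have hzero : ∀ v ∈ μ.cells, v ∉ (Finset.range (a + 1) ×ˢ Finset.range (b + 1)) →
      FF μ a b v = 0 := by
    intro v _ hv
    rw [Finset.mem_product, Finset.mem_range, Finset.mem_range] at hv
    rw [FF, if_neg (by omega)]
  rw [← Finset.sum_subset hsub hzero, Finset.sum_product]
  have hcongr : ∀ x ∈ Finset.range (a + 1), ∑ y ∈ Finset.range (b + 1), FF μ a b (x, y)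
      = Frow μ a b x * ∑ y ∈ Finset.range (b + 1), Frow μ.transpose b a y := by
    intro x hxx
    rw [Finset.mem_range] at hxx
    rw [Finset.mul_sum]
    refine Finset.sum_congr rfl (fun y hyy => ?_)
    rw [Finset.mem_range] at hyy
    rw [FF, if_pos ⟨by omega, by omega⟩]
  rw [Finset.sum_congr rfl hcongr, ← Finset.sum_mul]
  have e1 : ∑ x ∈ Finset.range (a + 1), Frow μ a b x = PP μ a b 0 := by
    rw [Finset.range_eq_Ico, Frow_sum μ b (by omega)]
  have e2 : ∑ y ∈ Finset.range (b + 1), Frow μ.transpose b a y = PP μ.transpose b a 0 := by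
    rw [Finset.range_eq_Ico, Frow_sum μ.transpose a (by omega)]
  rw [e1, e2]

end Walk2

section Walk3

/-- Total weight of a cell over all corners. -/
noncomputable def GG (μ : YoungDiagram) (v : ℕ × ℕ) : ℚ :=
  ∑ c ∈ corners μ, FF μ c.1 c.2 v

lemma corners_incomparable {μ : YoungDiagram} {c c' : ℕ × ℕ} (hc : c ∈ corners μ)
    (hc' : c' ∈ corners μ) (h1 : c.1 ≤ c'.1) (h2 : c.2 ≤ c'.2) : c = c' := by
  rw [mem_corners] at hc hc'
  have e1 : c.1 = c'.1 := by
    by_contra hne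
    exact hc.2.1 (μ.up_left_mem (by omega) h2 hc'.1)
  have e2 : c.2 = c'.2 := by
    by_contra hne
    exact hc.2.2 (μ.up_left_mem h1 (by omega) hc'.1)
  exact Prod.ext e1 e2

lemma FF_self (μ : YoungDiagram) (a b : ℕ) : FF μ a b (a, b) = 1 := by
  rw [FF, if_pos ⟨le_rfl, le_rfl⟩]
  have e1 : Frow μ a b (a, b).1 = 1 := by rw [Frow, if_pos rfl]
  have e2 : Frow μ.transpose b a (a, b).2 = 1 := by rw [Frow, if_pos rfl]
  rw [e1, e2, mul_one]

lemma GG_corner {μ : YoungDiagram} {v : ℕ × ℕ} (hv : v ∈ corners μ) : GG μ v = 1 := by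
  rw [GG]
  rw [Finset.sum_eq_single_of_mem v hv]
  · exact FF_self μ v.1 v.2
  · intro c hc hne
    by_cases hcmp : v.1 ≤ c.1 ∧ v.2 ≤ c.2
    · exact absurd (corners_incomparable hv hc hcmp.1 hcmp.2).symm hne
    · rw [FF, if_neg hcmp]

lemma row_replace {μ : YoungDiagram} {a b : ℕ} (h : IsCorner μ a b) {x y : ℕ}
    (hy : (x, y) ∈ μ) :
    ∑ i ∈ Finset.Ioc x a, FF μ a b (i, y)
      = ∑ i ∈ Finset.Ioc x (μ.colLen y - 1), FF μ a b (i, y) := by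
  have hcl : x + 1 ≤ μ.colLen y := YoungDiagram.mem_iff_lt_colLen.1 hy
  set M := max a (μ.colLen y - 1) with hM
  have s1 : Finset.Ioc x a ⊆ Finset.Ioc x M :=
    Finset.Ioc_subset_Ioc le_rfl (le_max_left _ _)
  have e1 : ∀ i ∈ Finset.Ioc x M, i ∉ Finset.Ioc x a → FF μ a b (i, y) = 0 := by
    intro i hi hni
    rw [Finset.mem_Ioc] at hi
    rw [Finset.mem_Ioc] at hni
    rw [FF, if_neg (by simp only; omega)]
  have s2 : Finset.Ioc x (μ.colLen y - 1) ⊆ Finset.Ioc x M :=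
    Finset.Ioc_subset_Ioc le_rfl (le_max_right _ _)
  have e2 : ∀ i ∈ Finset.Ioc x M, i ∉ Finset.Ioc x (μ.colLen y - 1) → FF μ a b (i, y) = 0 := by
    intro i hi hni
    rw [Finset.mem_Ioc] at hi
    rw [Finset.mem_Ioc] at hni
    have hia : i ≤ a := by omega
    have hicl : μ.colLen y ≤ i := by omega
    rw [FF, if_neg ?_]
    rintro ⟨-, hyb⟩
    have : (i, y) ∈ μ := μ.up_left_mem hia hyb h.1
    rw [YoungDiagram.mem_iff_lt_colLen] at this
    omega
  exact (Finset.sum_subset s1 e1).trans (Finset.sum_subset s2 e2).symm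

lemma col_replace {μ : YoungDiagram} {a b : ℕ} (h : IsCorner μ a b) {x y : ℕ}
    (hy : (x, y) ∈ μ) :
    ∑ j ∈ Finset.Ioc y b, FF μ a b (x, j)
      = ∑ j ∈ Finset.Ioc y (μ.rowLen x - 1), FF μ a b (x, j) := by
  have hT : ∀ (s : Finset ℕ), ∑ j ∈ s, FF μ a b (x, j) = ∑ j ∈ s, FF μ.transpose b a (j, x) :=
    fun s => Finset.sum_congr rfl (fun j _ => (FF_transpose μ a b x j).symm)
  rw [hT, hT]
  have hyT : (y, x) ∈ μ.transpose := YoungDiagram.mem_transpose.2 hy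
  have := row_replace (isCorner_transpose h) hyT
  rw [YoungDiagram.colLen_transpose] at this
  exact this

lemma two_le_hookLength {μ : YoungDiagram} {x y : ℕ} (hv : (x, y) ∈ μ)
    (hcor : ¬ IsCorner μ x y) : 2 ≤ hookLength μ x y := by
  have h1 : y + 1 ≤ μ.rowLen x := YoungDiagram.mem_iff_lt_rowLen.1 hv
  have h2 : x + 1 ≤ μ.colLen y := YoungDiagram.mem_iff_lt_colLen.1 hv
  have : (x + 1, y) ∈ μ ∨ (x, y + 1) ∈ μ := by
    by_contra hc
    push_neg at hc
    exact hcor ⟨hv, hc.1, hc.2⟩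
  rw [YoungDiagram.mem_iff_lt_colLen, YoungDiagram.mem_iff_lt_rowLen] at this
  rw [hookLength]
  omega

lemma GG_eq_one (μ : YoungDiagram) : ∀ v ∈ μ, GG μ v = 1 := by
  suffices key : ∀ k, ∀ v : ℕ × ℕ, v ∈ μ → μ.rowLen 0 + μ.colLen 0 ≤ v.1 + v.2 + k →
      GG μ v = 1 by
    intro v hv
    exact key (μ.rowLen 0 + μ.colLen 0) v hv (by omega)
  intro k
  induction k with
  | zero =>
    intro v hv hbound
    exfalso
    have h1 : v.1 + 1 ≤ μ.colLen v.2 := YoungDiagram.mem_iff_lt_colLen.1 hv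
    have h2 : v.2 + 1 ≤ μ.rowLen v.1 := YoungDiagram.mem_iff_lt_rowLen.1 hv
    have h3 : μ.colLen v.2 ≤ μ.colLen 0 := μ.colLen_anti 0 v.2 (Nat.zero_le _)
    have h4 : μ.rowLen v.1 ≤ μ.rowLen 0 := μ.rowLen_anti 0 v.1 (Nat.zero_le _)
    omega
  | succ k ih =>
    rintro ⟨x, y⟩ hv hbound
    by_cases hcor : IsCorner μ x y
    · exact GG_corner (mem_corners.2 hcor)
    · have h2le : 2 ≤ hookLength μ x y := two_le_hookLength hv hcor
      have hne0 : hq μ x y - 1 ≠ 0 := by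
        have : (2 : ℚ) ≤ hq μ x y := by rw [hq]; exact_mod_cast h2le
        intro hc
        rw [sub_eq_zero] at hc
        rw [hc] at this
        norm_num at this
      have h1 : y + 1 ≤ μ.rowLen x := YoungDiagram.mem_iff_lt_rowLen.1 hv
      have h2 : x + 1 ≤ μ.colLen y := YoungDiagram.mem_iff_lt_colLen.1 hv
      have hrec : (hq μ x y - 1) * GG μ (x, y)
          = (∑ i ∈ Finset.Ioc x (μ.colLen y - 1), GG μ (i, y))
            + ∑ j ∈ Finset.Ioc y (μ.rowLen x - 1), GG μ (x, j) := by
        rw [GG, Finset.mul_sum]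
        have step : ∀ c ∈ corners μ, (hq μ x y - 1) * FF μ c.1 c.2 (x, y)
            = (∑ i ∈ Finset.Ioc x (μ.colLen y - 1), FF μ c.1 c.2 (i, y))
              + ∑ j ∈ Finset.Ioc y (μ.rowLen x - 1), FF μ c.1 c.2 (x, j) := by
          intro c hc
          have hcc := mem_corners.1 hc
          have hnev : (x, y) ≠ (c.1, c.2) := by
            intro hvc
            rw [Prod.mk.injEq] at hvc
            apply hcor
            rw [hvc.1, hvc.2]
            exact hcc
          rw [FF_rec hcc hnev, row_replace hcc hv, col_replace hcc hv]
        rw [Finset.sum_congr rfl step, Finset.sum_add_distrib, Finset.sum_comm,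
          Finset.sum_comm (s := corners μ)]
        rfl
      have hval1 : ∑ i ∈ Finset.Ioc x (μ.colLen y - 1), GG μ (i, y)
          = ((μ.colLen y - 1 - x : ℕ) : ℚ) := by
        rw [Finset.sum_congr rfl (fun i hi => ?_), Finset.sum_const, Nat.card_Ioc,
          nsmul_eq_mul, mul_one]
        rw [Finset.mem_Ioc] at hi
        have hmem : (i, y) ∈ μ := by
          rw [YoungDiagram.mem_iff_lt_colLen]
          omega
        exact ih (i, y) hmem (by simp only; omega)
      have hval2 : ∑ j ∈ Finset.Ioc y (μ.rowLen x - 1), GG μ (x, j)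
          = ((μ.rowLen x - 1 - y : ℕ) : ℚ) := by
        rw [Finset.sum_congr rfl (fun j hj => ?_), Finset.sum_const, Nat.card_Ioc,
          nsmul_eq_mul, mul_one]
        rw [Finset.mem_Ioc] at hj
        have hmem : (x, j) ∈ μ := by
          rw [YoungDiagram.mem_iff_lt_rowLen]
          omega
        exact ih (x, j) hmem (by simp only; omega)
      have htot : (hq μ x y - 1) * GG μ (x, y) = hq μ x y - 1 := by
        rw [hrec, hval1, hval2, hq]
        have : hookLength μ x y = (μ.colLen y - 1 - x) + (μ.rowLen x - 1 - y) + 1 := by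
          rw [hookLength]; omega
        rw [this]
        push_cast
        ring
      have := mul_left_cancel₀ hne0 (htot.trans (mul_one _).symm)
      exact this

/-- The Greene–Nijenhuis–Wilf identity: the corner weights sum to `n`. -/
lemma sum_corners_eq_card (μ : YoungDiagram) :
    ∑ c ∈ corners μ, PP μ c.1 c.2 0 * PP μ.transpose c.2 c.1 0 = (μ.card : ℚ) := by
  have step : ∀ c ∈ corners μ, PP μ c.1 c.2 0 * PP μ.transpose c.2 c.1 0
      = ∑ v ∈ μ.cells, FF μ c.1 c.2 v := by
    intro c hc
    exact (FF_total (mem_corners.1 hc)).symm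
  rw [Finset.sum_congr rfl step, Finset.sum_comm]
  have : ∀ v ∈ μ.cells, ∑ c ∈ corners μ, FF μ c.1 c.2 v = 1 := by
    intro v hv
    exact GG_eq_one μ v ((YoungDiagram.mem_cells v).1 hv)
  rw [Finset.sum_congr rfl this, Finset.sum_const, nsmul_eq_mul, mul_one]

end Walk3

section Walk4

variable {μ : YoungDiagram} {a b : ℕ}

lemma hookLength_erase_row (h : IsCorner μ a b) {j : ℕ} (hj : j < b) :
    hookLength μ a j = hookLength (eraseCorner μ a b h) a j + 1 := by
  rw [hookLength, hookLength, rowLen_eraseCorner h, colLen_eraseCorner h,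
    if_pos rfl, if_neg (by omega), h.rowLen]
  have hcl : a + 1 ≤ μ.colLen j := by
    have := YoungDiagram.mem_iff_lt_colLen.1 (μ.up_left_mem le_rfl (by omega : j ≤ b) h.1)
    omega
  omega

lemma hq_erase_row (h : IsCorner μ a b) {j : ℕ} (hj : j < b) :
    hq (eraseCorner μ a b h) a j = pp μ.transpose b a j := by
  rw [pp, hq_transpose, hq, hq, hookLength_erase_row h hj]
  push_cast
  ring

lemma hookLength_erase_col (h : IsCorner μ a b) {i : ℕ} (hi : i < a) :
    hookLength μ i b = hookLength (eraseCorner μ a b h) i b + 1 := by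
  rw [hookLength, hookLength, rowLen_eraseCorner h, colLen_eraseCorner h,
    if_neg (by omega), if_pos rfl, h.colLen]
  have hrl : b + 1 ≤ μ.rowLen i := by
    have := YoungDiagram.mem_iff_lt_rowLen.1 (μ.up_left_mem (by omega : i ≤ a) le_rfl h.1)
    omega
  omega

lemma hq_erase_col (h : IsCorner μ a b) {i : ℕ} (hi : i < a) :
    hq (eraseCorner μ a b h) i b = pp μ a b i := by
  rw [pp, hq, hq, hookLength_erase_col h hi]
  push_cast
  ring

lemma hq_erase_other (h : IsCorner μ a b) {i j : ℕ} (hi : i ≠ a) (hj : j ≠ b) :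
    hq (eraseCorner μ a b h) i j = hq μ i j := by
  rw [hq, hq, hookLength, hookLength, rowLen_eraseCorner h, colLen_eraseCorner h,
    if_neg hi, if_neg hj]
  norm_num

/-- The ratio function for the hook products of `μ` and `μ` minus a corner. -/
noncomputable def rr (μ : YoungDiagram) (a b : ℕ) (v : ℕ × ℕ) : ℚ :=
  if v.1 = a then 1 + 1 / pp μ.transpose b a v.2
  else if v.2 = b then 1 + 1 / pp μ a b v.1
  else 1

lemma hq_ratio (h : IsCorner μ a b) {v : ℕ × ℕ} (hv : v ∈ (eraseCorner μ a b h).cells) :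
    hq μ v.1 v.2 = rr μ a b v * hq (eraseCorner μ a b h) v.1 v.2 := by
  rw [YoungDiagram.mem_cells, mem_eraseCorner h] at hv
  obtain ⟨hvμ, hvne⟩ := hv
  have hv1 : v = (v.1, v.2) := rfl
  by_cases h1 : v.1 = a
  · have hj : v.2 < b := by
      have : v.2 + 1 ≤ μ.rowLen v.1 := YoungDiagram.mem_iff_lt_rowLen.1 (by rw [← hv1]; exact hvμ)
      rw [h1, h.rowLen] at this
      have : v.2 ≠ b := by
        intro hc
        exact hvne (Prod.ext h1 hc)
      omega
    rw [rr, if_pos h1]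
    have e1 : hq (eraseCorner μ a b h) v.1 v.2 = pp μ.transpose b a v.2 := by
      rw [h1]; exact hq_erase_row h hj
    rw [e1]
    have hq0 := pp_ne_zero (isCorner_transpose h) hj
    have e2 : hq μ v.1 v.2 = pp μ.transpose b a v.2 + 1 := by
      rw [pp, hq_transpose, h1]; ring
    rw [e2]
    field_simp
  · by_cases h2 : v.2 = b
    · have hi : v.1 < a := by
        have : v.1 + 1 ≤ μ.colLen v.2 := YoungDiagram.mem_iff_lt_colLen.1 (by rw [← hv1]; exact hvμ)
        rw [h2, h.colLen] at this
        omega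
      rw [rr, if_neg h1, if_pos h2]
      have e1 : hq (eraseCorner μ a b h) v.1 v.2 = pp μ a b v.1 := by
        rw [h2]; exact hq_erase_col h hi
      rw [e1]
      have hp0 := pp_ne_zero h hi
      have e2 : hq μ v.1 v.2 = pp μ a b v.1 + 1 := by
        rw [pp, h2]; ring
      rw [e2]
      field_simp
    · rw [rr, if_neg h1, if_neg h2, hq_erase_other h h1 h2, one_mul]

lemma prod_rr (h : IsCorner μ a b) :
    ∏ v ∈ (eraseCorner μ a b h).cells, rr μ a b v
      = PP μ a b 0 * PP μ.transpose b a 0 := by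
  classical
  set rowpart : Finset (ℕ × ℕ) := (Finset.range b).image (fun j => (a, j)) with hrowpart
  set colpart : Finset (ℕ × ℕ) := (Finset.range a).image (fun i => (i, b)) with hcolpart
  have hdisj : Disjoint rowpart colpart := by
    rw [Finset.disjoint_left]
    rintro v hv1 hv2
    rw [hrowpart, Finset.mem_image] at hv1
    rw [hcolpart, Finset.mem_image] at hv2
    obtain ⟨j, hj, rfl⟩ := hv1
    obtain ⟨i, hi, hij⟩ := hv2
    rw [Finset.mem_range] at hj
    have := congrArg Prod.snd hij
    simp only at this
    omega
  have hsub : rowpart ∪ colpart ⊆ (eraseCorner μ a b h).cells := by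
    intro v hv
    rw [Finset.mem_union] at hv
    rw [YoungDiagram.mem_cells, mem_eraseCorner h]
    rcases hv with hv | hv
    · rw [hrowpart, Finset.mem_image] at hv
      obtain ⟨j, hj, rfl⟩ := hv
      rw [Finset.mem_range] at hj
      refine ⟨μ.up_left_mem le_rfl (by omega) h.1, ?_⟩
      intro hc
      rw [Prod.mk.injEq] at hc
      omega
    · rw [hcolpart, Finset.mem_image] at hv
      obtain ⟨i, hi, rfl⟩ := hv
      rw [Finset.mem_range] at hi
      refine ⟨μ.up_left_mem (by omega) le_rfl h.1, ?_⟩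
      intro hc
      rw [Prod.mk.injEq] at hc
      omega
  have hone : ∀ v ∈ (eraseCorner μ a b h).cells, v ∉ rowpart ∪ colpart → rr μ a b v = 1 := by
    intro v hv hnv
    rw [YoungDiagram.mem_cells, mem_eraseCorner h] at hv
    rw [Finset.mem_union, hrowpart, hcolpart, Finset.mem_image, Finset.mem_image] at hnv
    push_neg at hnv
    have h1 : v.1 ≠ a := by
      intro hc
      have hj : v.2 < b := by
        have := YoungDiagram.mem_iff_lt_rowLen.1 (show (v.1, v.2) ∈ μ from hv.1)
        rw [hc, h.rowLen] at this
        have : v.2 ≠ b := fun hcc => hv.2 (Prod.ext hc hcc)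
        omega
      exact (hnv.1 v.2 (Finset.mem_range.2 hj)) (by rw [← hc])
    have h2 : v.2 ≠ b := by
      intro hc
      have hi : v.1 < a := by
        have := YoungDiagram.mem_iff_lt_colLen.1 (show (v.1, v.2) ∈ μ from hv.1)
        rw [hc, h.colLen] at this
        omega
      exact (hnv.2 v.1 (Finset.mem_range.2 hi)) (by rw [← hc])
    rw [rr, if_neg h1, if_neg h2]
  rw [← Finset.prod_subset hsub hone, Finset.prod_union hdisj]
  have e1 : ∏ v ∈ rowpart, rr μ a b v = PP μ.transpose b a 0 := by
    rw [hrowpart, Finset.prod_image (by intro x _ y _ hxy; simpa using hxy)]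
    rw [PP, Finset.range_eq_Ico]
    refine Finset.prod_congr rfl (fun j _ => ?_)
    rw [rr, if_pos rfl]
  have e2 : ∏ v ∈ colpart, rr μ a b v = PP μ a b 0 := by
    rw [hcolpart, Finset.prod_image (by intro x _ y _ hxy; simpa using hxy)]
    rw [PP, Finset.range_eq_Ico]
    refine Finset.prod_congr rfl (fun i hi => ?_)
    rw [Finset.mem_Ico] at hi
    rw [rr, if_neg (by simp only; omega), if_pos rfl]
  rw [e1, e2, mul_comm]

/-- Hook products of `μ` and `μ` minus a corner. -/
lemma prod_hq_eraseCorner (h : IsCorner μ a b) :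
    ∏ v ∈ μ.cells, hq μ v.1 v.2
      = (PP μ a b 0 * PP μ.transpose b a 0)
        * ∏ v ∈ (eraseCorner μ a b h).cells, hq (eraseCorner μ a b h) v.1 v.2 := by
  have hmem : (a, b) ∈ μ.cells := (YoungDiagram.mem_cells _).2 h.1
  have e0 : ∏ v ∈ μ.cells, hq μ v.1 v.2
      = hq μ a b * ∏ v ∈ μ.cells.erase (a, b), hq μ v.1 v.2 :=
    (Finset.mul_prod_erase μ.cells _ hmem).symm
  have ecells : (eraseCorner μ a b h).cells = μ.cells.erase (a, b) := rfl
  rw [e0, hq_corner h, one_mul, ← ecells]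
  rw [Finset.prod_congr rfl (fun v hv => hq_ratio h hv), Finset.prod_mul_distrib, prod_rr h]

end Walk4

end HLF

namespace HLF

/-- The type of standard Young tableaux of shape `μ`. -/
def SYT (μ : YoungDiagram) : Type :=
  {f : {c : ℕ × ℕ // c ∈ μ.cells} → Fin μ.card // IsStandardYoungTableau μ f}

noncomputable instance (μ : YoungDiagram) : Fintype (SYT μ) := by
  classical
  unfold SYT
  infer_instance

lemma card_cells_coe (μ : YoungDiagram) :
    Fintype.card {c : ℕ × ℕ // c ∈ μ.cells} = μ.card := Fintype.card_coe _

section Top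

variable {μ : YoungDiagram} (hpos : 0 < μ.card)

/-- The largest entry of `Fin μ.card`. -/
def last : Fin μ.card := ⟨μ.card - 1, by omega⟩

/-- The cell containing the largest entry. -/
noncomputable def topCell (F : SYT μ) : {c : ℕ × ℕ // c ∈ μ.cells} :=
  (Equiv.ofBijective F.1 F.2.1).symm (last hpos)

lemma apply_topCell (F : SYT μ) : F.1 (topCell hpos F) = last hpos :=
  (Equiv.ofBijective F.1 F.2.1).apply_symm_apply _

lemma lt_of_ne_topCell (F : SYT μ) (v : {c : ℕ × ℕ // c ∈ μ.cells})
    (hv : v ≠ topCell hpos F) : (F.1 v : ℕ) < μ.card - 1 := by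
  have h1 : F.1 v ≠ last hpos := by
    intro hc
    exact hv (F.2.1.1 (hc.trans (apply_topCell hpos F).symm))
  have h2 := (F.1 v).2
  have : (F.1 v : ℕ) ≠ μ.card - 1 := fun hc => h1 (Fin.ext hc)
  omega

lemma topCell_isCorner (F : SYT μ) :
    IsCorner μ (topCell hpos F).1.1 (topCell hpos F).1.2 := by
  set t := topCell hpos F with ht
  refine ⟨by simpa using t.2, ?_, ?_⟩
  · intro hc
    have hlt := F.2.2.2 t ⟨_, (YoungDiagram.mem_cells _).2 hc⟩ rfl (by simp)
    rw [apply_topCell hpos F] at hlt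
    have := (F.1 ⟨_, (YoungDiagram.mem_cells _).2 hc⟩).2
    simp only [last] at hlt
    omega
  · intro hc
    have hlt := F.2.2.1 t ⟨_, (YoungDiagram.mem_cells _).2 hc⟩ rfl (by simp)
    rw [apply_topCell hpos F] at hlt
    have := (F.1 ⟨_, (YoungDiagram.mem_cells _).2 hc⟩).2
    simp only [last] at hlt
    omega

end Top

end HLF

namespace HLF2
open HLF

section Fiber

variable {μ : YoungDiagram} {a b : ℕ} (h : IsCorner μ a b) (hpos : 0 < μ.card)

lemma mem_erase_cells {v : ℕ × ℕ} (hv : v ∈ (eraseCorner μ a b h).cells) :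
    v ∈ μ.cells ∧ v ≠ (a, b) := by
  rw [YoungDiagram.mem_cells] at hv
  rw [mem_eraseCorner h] at hv
  exact ⟨(YoungDiagram.mem_cells _).2 hv.1, hv.2⟩

lemma mem_erase_cells' {v : ℕ × ℕ} (hv1 : v ∈ μ.cells) (hv2 : v ≠ (a, b)) :
    v ∈ (eraseCorner μ a b h).cells := by
  rw [YoungDiagram.mem_cells, mem_eraseCorner h]
  exact ⟨(YoungDiagram.mem_cells _).1 hv1, hv2⟩

lemma card_erase' : (eraseCorner μ a b h).card = μ.card - 1 := card_eraseCorner h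

lemma topCell_eq_of_apply_eq_last (F : SYT μ) (v : {c : ℕ × ℕ // c ∈ μ.cells})
    (hv : F.1 v = last hpos) : topCell hpos F = v := by
  unfold topCell
  rw [← hv]
  exact (Equiv.ofBijective F.1 F.2.1).symm_apply_apply v

/-- Restriction of a SYT of `μ` whose top cell is the corner `(a,b)`. -/
noncomputable def restrictFun (F : SYT μ) (htop : (topCell hpos F).1 = (a, b)) :
    {c : ℕ × ℕ // c ∈ (eraseCorner μ a b h).cells} → Fin (eraseCorner μ a b h).card :=
  fun v => ⟨F.1 ⟨v.1, (mem_erase_cells h v.2).1⟩, by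
    rw [card_erase' h]
    exact lt_of_ne_topCell hpos F _ (fun hc => (mem_erase_cells h v.2).2
      (by rw [← htop, ← hc]))⟩

lemma restrictFun_isSYT (F : SYT μ) (htop : (topCell hpos F).1 = (a, b)) :
    IsStandardYoungTableau (eraseCorner μ a b h) (restrictFun h hpos F htop) := by
  have hinj : Function.Injective (restrictFun h hpos F htop) := by
    intro v w hvw
    have h1 := congrArg Fin.val hvw
    have h2 : F.1 ⟨v.1, (mem_erase_cells h v.2).1⟩ = F.1 ⟨w.1, (mem_erase_cells h w.2).1⟩ :=
      Fin.ext h1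
    have h3 := F.2.1.1 h2
    have h4 := congrArg Subtype.val h3
    exact Subtype.ext h4
  refine ⟨(Fintype.bijective_iff_injective_and_card _).2 ⟨hinj, by
    rw [card_cells_coe, Fintype.card_fin]⟩, ?_, ?_⟩
  · intro v w h1 h2
    exact F.2.2.1 _ _ h1 h2
  · intro v w h1 h2
    exact F.2.2.2 _ _ h1 h2

/-- Extension of a SYT of `μ` minus the corner `(a,b)` to one of `μ`. -/
noncomputable def extendFun (G : SYT (eraseCorner μ a b h)) :
    {c : ℕ × ℕ // c ∈ μ.cells} → Fin μ.card := fun v =>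
  if hv : v.1 = (a, b) then last hpos
  else ⟨(G.1 ⟨v.1, mem_erase_cells' h v.2 hv⟩ : ℕ), by
    have h1 := (G.1 ⟨v.1, mem_erase_cells' h v.2 hv⟩).2
    have h2 := card_erase' h
    omega⟩

lemma extendFun_corner (G : SYT (eraseCorner μ a b h)) (v : {c : ℕ × ℕ // c ∈ μ.cells})
    (hv : v.1 = (a, b)) : extendFun h hpos G v = last hpos := by
  simp [extendFun, hv]

lemma extendFun_ne (G : SYT (eraseCorner μ a b h)) (v : {c : ℕ × ℕ // c ∈ μ.cells})
    (hv : v.1 ≠ (a, b)) :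
    (extendFun h hpos G v : ℕ) = G.1 ⟨v.1, mem_erase_cells' h v.2 hv⟩ := by
  simp [extendFun, hv]

lemma extendFun_ne_lt (G : SYT (eraseCorner μ a b h)) (v : {c : ℕ × ℕ // c ∈ μ.cells})
    (hv : v.1 ≠ (a, b)) : (extendFun h hpos G v : ℕ) < μ.card - 1 := by
  rw [extendFun_ne h hpos G v hv]
  have h1 := (G.1 ⟨v.1, mem_erase_cells' h v.2 hv⟩).2
  have h2 := card_erase' h
  omega

lemma extendFun_isSYT (G : SYT (eraseCorner μ a b h)) :
    IsStandardYoungTableau μ (extendFun h hpos G) := by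
  have hinj : Function.Injective (extendFun h hpos G) := by
    intro v w hvw
    by_cases hv : v.1 = (a, b) <;> by_cases hw : w.1 = (a, b)
    · exact Subtype.ext (hv.trans hw.symm)
    · exfalso
      have h1 : (extendFun h hpos G v : ℕ) = μ.card - 1 := by
        rw [extendFun_corner h hpos G v hv]; rfl
      have h2 := extendFun_ne_lt h hpos G w hw
      rw [hvw] at h1; omega
    · exfalso
      have h1 : (extendFun h hpos G w : ℕ) = μ.card - 1 := by
        rw [extendFun_corner h hpos G w hw]; rfl
      have h2 := extendFun_ne_lt h hpos G v hv
      rw [hvw] at h2; omega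
    · have h1 := extendFun_ne h hpos G v hv
      have h2 := extendFun_ne h hpos G w hw
      have : (G.1 ⟨v.1, mem_erase_cells' h v.2 hv⟩ : ℕ) =
          (G.1 ⟨w.1, mem_erase_cells' h w.2 hw⟩ : ℕ) := by
        rw [← h1, ← h2, hvw]
      have h3 := G.2.1.1 (Fin.ext this)
      have h4 := congrArg Subtype.val h3
      exact Subtype.ext h4
  have hrow : ∀ v w : {c : ℕ × ℕ // c ∈ μ.cells}, v.1.1 = w.1.1 → v.1.2 < w.1.2 →
      (extendFun h hpos G v : ℕ) < extendFun h hpos G w := by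
    intro v w h1 h2
    have hv : v.1 ≠ (a, b) := by
      intro hc
      -- then w is in row a with column > b, contradicting corner
      apply h.2.2
      have : (w.1.1, w.1.2) ∈ μ := by
        rw [← YoungDiagram.mem_cells]; exact w.2
      have hb : b + 1 ≤ w.1.2 := by
        have := congrArg Prod.snd hc; simp at this; omega
      have ha : w.1.1 = a := by
        have := congrArg Prod.fst hc; simp at this; omega
      exact μ.up_left_mem (le_of_eq ha.symm) hb this
    by_cases hw : w.1 = (a, b)
    · have := extendFun_ne_lt h hpos G v hv
      rw [extendFun_corner h hpos G w hw]
      simp only [last]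
      omega
    · rw [extendFun_ne h hpos G v hv, extendFun_ne h hpos G w hw]
      exact G.2.2.1 _ _ h1 h2
  have hcol : ∀ v w : {c : ℕ × ℕ // c ∈ μ.cells}, v.1.2 = w.1.2 → v.1.1 < w.1.1 →
      (extendFun h hpos G v : ℕ) < extendFun h hpos G w := by
    intro v w h1 h2
    have hv : v.1 ≠ (a, b) := by
      intro hc
      apply h.2.1
      have : (w.1.1, w.1.2) ∈ μ := by
        rw [← YoungDiagram.mem_cells]; exact w.2
      have hb : a + 1 ≤ w.1.1 := by
        have := congrArg Prod.fst hc; simp at this; omega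
      have ha : w.1.2 = b := by
        have := congrArg Prod.snd hc; simp at this; omega
      exact μ.up_left_mem hb (le_of_eq ha.symm) this
    by_cases hw : w.1 = (a, b)
    · have := extendFun_ne_lt h hpos G v hv
      rw [extendFun_corner h hpos G w hw]
      simp only [last]
      omega
    · rw [extendFun_ne h hpos G v hv, extendFun_ne h hpos G w hw]
      exact G.2.2.2 _ _ h1 h2
  exact ⟨(Fintype.bijective_iff_injective_and_card _).2 ⟨hinj, by
    rw [card_cells_coe, Fintype.card_fin]⟩, hrow, hcol⟩

lemma card_fiber :
    Nat.card {F : SYT μ // (topCell hpos F).1 = (a, b)} =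
      Nat.card (SYT (eraseCorner μ a b h)) := by
  have hmem : (a, b) ∈ μ.cells := (YoungDiagram.mem_cells _).2 h.1
  apply Nat.card_eq_of_bijective
    (f := fun F => (⟨restrictFun h hpos F.1 F.2, restrictFun_isSYT h hpos F.1 F.2⟩ :
      SYT (eraseCorner μ a b h)))
  constructor
  · rintro ⟨F, hF⟩ ⟨F', hF'⟩ hFF
    have hval : ∀ v, restrictFun h hpos F hF v = restrictFun h hpos F' hF' v := by
      intro v
      exact congrFun (congrArg Subtype.val hFF) v
    apply Subtype.ext
    apply Subtype.ext
    funext v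
    show F.1 v = F'.1 v
    by_cases hv : v.1 = (a, b)
    · have h1 : topCell hpos F = v := Subtype.ext (hF.trans hv.symm)
      have h2 : topCell hpos F' = v := Subtype.ext (hF'.trans hv.symm)
      have e1 : F.1 v = last hpos := by rw [← h1]; exact apply_topCell hpos F
      have e2 : F'.1 v = last hpos := by rw [← h2]; exact apply_topCell hpos F'
      rw [e1, e2]
    · have hv' : v.1 ∈ (eraseCorner μ a b h).cells := mem_erase_cells' h v.2 hv
      have h5 := congrArg Fin.val (hval ⟨v.1, hv'⟩)
      exact Fin.ext h5
  · intro G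
    have htop : (topCell hpos ⟨extendFun h hpos G, extendFun_isSYT h hpos G⟩).1 = (a, b) := by
      have := topCell_eq_of_apply_eq_last hpos ⟨extendFun h hpos G, extendFun_isSYT h hpos G⟩
        ⟨(a, b), hmem⟩ (extendFun_corner h hpos G ⟨(a, b), hmem⟩ rfl)
      rw [this]
    refine ⟨⟨⟨extendFun h hpos G, extendFun_isSYT h hpos G⟩, htop⟩, ?_⟩
    apply Subtype.ext
    funext v
    apply Fin.ext
    show (restrictFun h hpos _ htop v : ℕ) = _
    unfold restrictFun
    simp only
    rw [extendFun_ne h hpos G ⟨v.1, (mem_erase_cells h v.2).1⟩ (mem_erase_cells h v.2).2]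

end Fiber

end HLF2

open HLF in
lemma card_SYT_eq_sum (μ : YoungDiagram) (hpos : 0 < μ.card) :
    Nat.card (SYT μ) = ∑ c ∈ (corners μ).attach,
      Nat.card (SYT (eraseCorner μ c.1.1 c.1.2 (mem_corners.1 c.2))) := by
  classical
  set g : SYT μ → {x // x ∈ corners μ} :=
    fun F => ⟨(topCell hpos F).1, mem_corners.2 (topCell_isCorner hpos F)⟩ with hg
  have h1 : Nat.card (SYT μ) = Nat.card (Σ c : {x // x ∈ corners μ}, {F : SYT μ // g F = c}) :=
    (Nat.card_congr (Equiv.sigmaFiberEquiv g)).symm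
  rw [h1]
  rw [Nat.card_eq_fintype_card, Fintype.card_sigma]
  rw [Finset.univ_eq_attach]
  refine Finset.sum_congr rfl (fun c _ => ?_)
  rw [← Nat.card_eq_fintype_card]
  rw [← HLF2.card_fiber (mem_corners.1 c.2) hpos]
  apply Nat.card_congr
  apply Equiv.subtypeEquivRight
  intro F
  constructor
  · intro hc
    exact congrArg Subtype.val hc
  · intro hc
    exact Subtype.ext hc



namespace HLF

lemma main_aux : ∀ n (μ : YoungDiagram), μ.card = n →
    (Nat.card (SYT μ) : ℚ) * ∏ v ∈ μ.cells, hq μ v.1 v.2 = (Nat.factorial n : ℚ) := by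
  intro n
  induction n with
  | zero =>
    intro μ hμ
    have hcells : μ.cells = ∅ := Finset.card_eq_zero.1 hμ
    rw [hcells, Finset.prod_empty, mul_one]
    have hempty : IsEmpty {c : ℕ × ℕ // c ∈ μ.cells} := by
      constructor
      rintro ⟨v, hv⟩
      rw [hcells] at hv
      exact absurd hv (Finset.notMem_empty v)
    have hcard1 : Nat.card (SYT μ) = 1 := by
      rw [Nat.card_eq_one_iff_unique]
      constructor
      · constructor
        rintro ⟨F, _⟩ ⟨G, _⟩
        apply Subtype.ext
        funext v
        exact hempty.elim v
      · refine ⟨⟨fun v => hempty.elim v, ?_, ?_, ?_⟩⟩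
        · constructor
          · intro v w _
            exact hempty.elim v
          · intro z
            exfalso
            have := z.2
            omega
        · intro v w _ _
          exact hempty.elim v
        · intro v w _ _
          exact hempty.elim v
    rw [hcard1, Nat.factorial]
  | succ m ih =>
    intro μ hμ
    have hpos : 0 < μ.card := by omega
    rw [card_SYT_eq_sum μ hpos]
    push_cast
    rw [Finset.sum_mul]
    have step : ∀ c ∈ (corners μ).attach,
        (Nat.card (SYT (eraseCorner μ c.1.1 c.1.2 (mem_corners.1 c.2))) : ℚ)
            * ∏ v ∈ μ.cells, hq μ v.1 v.2
          = (Nat.factorial m : ℚ)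
            * (PP μ c.1.1 c.1.2 0 * PP μ.transpose c.1.2 c.1.1 0) := by
      intro c _
      have h' : IsCorner μ c.1.1 c.1.2 := mem_corners.1 c.2
      rw [prod_hq_eraseCorner h']
      have hih := ih (eraseCorner μ c.1.1 c.1.2 h') (by rw [card_eraseCorner h']; omega)
      calc (Nat.card (SYT (eraseCorner μ c.1.1 c.1.2 h')) : ℚ)
          * ((PP μ c.1.1 c.1.2 0 * PP μ.transpose c.1.2 c.1.1 0)
            * ∏ v ∈ (eraseCorner μ c.1.1 c.1.2 h').cells, hq (eraseCorner μ c.1.1 c.1.2 h') v.1 v.2)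
          = ((Nat.card (SYT (eraseCorner μ c.1.1 c.1.2 h')) : ℚ)
              * ∏ v ∈ (eraseCorner μ c.1.1 c.1.2 h').cells, hq (eraseCorner μ c.1.1 c.1.2 h') v.1 v.2)
            * (PP μ c.1.1 c.1.2 0 * PP μ.transpose c.1.2 c.1.1 0) := by ring
        _ = (Nat.factorial m : ℚ) * (PP μ c.1.1 c.1.2 0 * PP μ.transpose c.1.2 c.1.1 0) := by
            rw [hih]
    rw [Finset.sum_congr rfl step, ← Finset.mul_sum]
    have hsum : ∑ c ∈ (corners μ).attach,
        (PP μ c.1.1 c.1.2 0 * PP μ.transpose c.1.2 c.1.1 0) = (μ.card : ℚ) := by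
      rw [Finset.sum_attach (corners μ) (fun v => PP μ v.1 v.2 0 * PP μ.transpose v.2 v.1 0)]
      exact sum_corners_eq_card μ
    rw [hsum, hμ]
    push_cast [Nat.factorial_succ]
    ring

end HLF


/-- Hook length formula: the number of standard Young tableaux of shape `μ` (that is,
the dimension `χ^μ(e)` of the irreducible representation of `S_n` indexed by `μ`)
equals `n! / ∏_{(i,j) ∈ μ} h_{i,j}`, stated multiplicatively. -/
theorem hook_length_formula (μ : YoungDiagram) :
    Nat.card {f : {c : ℕ × ℕ // c ∈ μ.cells} → Fin μ.card // IsStandardYoungTableau μ f} *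
      ∏ c ∈ μ.cells, hookLength μ c.1 c.2 = Nat.factorial μ.card := by
  have h := HLF.main_aux μ.card μ rfl
  have hcast : ((Nat.card (HLF.SYT μ) * ∏ c ∈ μ.cells, hookLength μ c.1 c.2 : ℕ) : ℚ)
      = ((Nat.factorial μ.card : ℕ) : ℚ) := by
    push_cast
    rw [show (∏ c ∈ μ.cells, (hookLength μ c.1 c.2 : ℚ)) = ∏ v ∈ μ.cells, HLF.hq μ v.1 v.2
      from rfl]
    exact h
  exact_mod_cast hcast
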